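/- Let (V,d) be a compact length space, ε > 0, and f, u : V → ℝ continuous. If −Δ∞^ε u(x) ≤ f(x) for all x ∈ V, then c_f(ε) ≥ 0. Similarly, if −Δ∞^ε u(x) ≥ f(x) for all x ∈ V, then c_f(ε) ≤ 0. -/

import Mathlib

open Set Filter Topology
open scoped ENNReal Classical

/-- Tug-of-war game values on the graph with adjacency relation `adj`, running payoff `f`
and terminal payoff `u₀`:
`u_{n+1}(x) = (1/2)(sup_{y∼x} u_n(y) + inf_{y∼x} u_n(y)) + f(x)`. -/
noncomputable def gameVal {V : Type*} (adj : V → V → Prop) (f u₀ : V → ℝ) : ℕ → V → ℝ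
  | 0 => u₀
  | n + 1 => fun x =>
      (sSup (gameVal adj f u₀ n '' {y | adj x y}) +
        sInf (gameVal adj f u₀ n '' {y | adj x y})) / 2 + f x

/-- `c` is Player I's long term advantage for running payoff `f`: the game values with
terminal payoff `0` satisfy that `(u_n - n·c)` is uniformly bounded. -/
def IsLTA {V : Type*} (adj : V → V → Prop) (f : V → ℝ) (c : ℝ) : Prop :=
  ∃ C : ℝ, ∀ (n : ℕ) (x : V), |gameVal adj f (fun _ => (0:ℝ)) n x - n * c| ≤ C

/-- `ReachesIn adj n x y`: there is a walk of length exactly `n` from `x` to `y`. -/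
def ReachesIn {V : Type*} (adj : V → V → Prop) : ℕ → V → V → Prop
  | 0 => fun x y => x = y
  | n + 1 => fun x y => ∃ z, adj x z ∧ ReachesIn adj n z y

/-- A compact length space: the (extended) distance between two points is the infimum of
the lengths (total variations) of continuous paths joining them. -/
def IsLengthSpace (V : Type*) [MetricSpace V] : Prop :=
  ∀ x y : V, edist x y = ⨅ γ : Path x y, eVariationOn (fun t => γ t) (Set.univ : Set unitInterval)

/-- The `ε`-discrete infinity Laplacian
`Δ∞^ε u(x) = (max_{B(x,ε)} u + min_{B(x,ε)} u − 2u(x))/ε²`. -/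
noncomputable def discLap {V : Type*} [MetricSpace V] (ε : ℝ) (u : V → ℝ) (x : V) : ℝ :=
  (sSup (u '' {y | dist x y ≤ ε}) + sInf (u '' {y | dist x y ≤ ε}) - 2 * u x) / ε ^ 2

section Aux

variable {V : Type*} {adj : V → V → Prop}

/-- The one-step tug-of-war operator. -/
noncomputable def Tstep (adj : V → V → Prop) (v : V → ℝ) (x : V) : ℝ :=
  (sSup (v '' {y | adj x y}) + sInf (v '' {y | adj x y})) / 2

lemma gameVal_succ (f u₀ : V → ℝ) (n : ℕ) (x : V) :
    gameVal adj f u₀ (n + 1) x = Tstep adj (gameVal adj f u₀ n) x + f x := rfl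

lemma img_ne (hne : ∀ x, {y | adj x y}.Nonempty) (v : V → ℝ) (x : V) :
    (v '' {y | adj x y}).Nonempty := (hne x).image v

lemma img_bddAbove {v : V → ℝ} {M : ℝ} (hv : ∀ y, v y ≤ M) (x : V) :
    BddAbove (v '' {y | adj x y}) :=
  ⟨M, by rintro r ⟨y, -, rfl⟩; exact hv y⟩

lemma img_bddBelow {v : V → ℝ} {M : ℝ} (hv : ∀ y, M ≤ v y) (x : V) :
    BddBelow (v '' {y | adj x y}) :=
  ⟨M, by rintro r ⟨y, -, rfl⟩; exact hv y⟩

lemma Tstep_le (hne : ∀ x, {y | adj x y}.Nonempty) {a b : V → ℝ} {C Ma Mb : ℝ}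
    (ha : ∀ y, |a y| ≤ Ma) (hb : ∀ y, |b y| ≤ Mb)
    (hab : ∀ y, a y ≤ b y + C) (x : V) :
    Tstep adj a x ≤ Tstep adj b x + C := by
  have hbA := img_bddAbove (adj := adj) (fun y => (abs_le.1 (hb y)).2) x
  have haB := img_bddBelow (adj := adj) (fun y => (abs_le.1 (ha y)).1) x
  have h1 : sSup (a '' {y | adj x y}) ≤ sSup (b '' {y | adj x y}) + C := by
    refine csSup_le (img_ne hne a x) ?_
    rintro r ⟨y, hy, rfl⟩
    exact (hab y).trans (add_le_add_left (le_csSup hbA ⟨y, hy, rfl⟩) C)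
  have h2 : sInf (a '' {y | adj x y}) - C ≤ sInf (b '' {y | adj x y}) := by
    refine le_csInf (img_ne hne b x) ?_
    rintro r ⟨y, hy, rfl⟩
    have h3 : sInf (a '' {y | adj x y}) ≤ a y := csInf_le haB ⟨y, hy, rfl⟩
    linarith [hab y]
  unfold Tstep
  linarith

lemma Tstep_abs_le (hne : ∀ x, {y | adj x y}.Nonempty) {v : V → ℝ} {M : ℝ}
    (hv : ∀ y, |v y| ≤ M) (x : V) : |Tstep adj v x| ≤ M := by
  have hA := img_bddAbove (adj := adj) (fun y => (abs_le.1 (hv y)).2) x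
  have hB := img_bddBelow (adj := adj) (fun y => (abs_le.1 (hv y)).1) x
  have h1 : sSup (v '' {y | adj x y}) ≤ M :=
    csSup_le (img_ne hne v x) (by rintro r ⟨y, -, rfl⟩; exact (abs_le.1 (hv y)).2)
  have h2 : -M ≤ sInf (v '' {y | adj x y}) :=
    le_csInf (img_ne hne v x) (by rintro r ⟨y, -, rfl⟩; exact (abs_le.1 (hv y)).1)
  have h3 : sInf (v '' {y | adj x y}) ≤ sSup (v '' {y | adj x y}) :=
    csInf_le_csSup (img_ne hne v x) hB hA
  rw [abs_le]
  unfold Tstep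
  constructor <;> linarith

lemma gameVal_abs_le (hne : ∀ x, {y | adj x y}.Nonempty) {f u₀ : V → ℝ} {Mf M0 : ℝ}
    (hf : ∀ x, |f x| ≤ Mf) (h0 : ∀ x, |u₀ x| ≤ M0) :
    ∀ (n : ℕ) (x : V), |gameVal adj f u₀ n x| ≤ M0 + n * Mf := by
  intro n
  induction n with
  | zero => intro x; simpa [gameVal] using h0 x
  | succ n ih =>
    intro x
    rw [gameVal_succ]
    have h1 := Tstep_abs_le hne ih x
    have h2 := hf x
    have h3 : ((n : ℝ) + 1) * Mf = n * Mf + Mf := by ring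
    calc |Tstep adj (gameVal adj f u₀ n) x + f x|
        ≤ |Tstep adj (gameVal adj f u₀ n) x| + |f x| := abs_add_le _ _
      _ ≤ (M0 + n * Mf) + Mf := add_le_add h1 h2
      _ = M0 + (n + 1 : ℕ) * Mf := by push_cast; ring

lemma gameVal_le_gameVal (hne : ∀ x, {y | adj x y}.Nonempty) {f a b : V → ℝ}
    {Mf Ma Mb C : ℝ}
    (hf : ∀ x, |f x| ≤ Mf) (ha : ∀ x, |a x| ≤ Ma) (hb : ∀ x, |b x| ≤ Mb)
    (hab : ∀ x, a x ≤ b x + C) :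
    ∀ (n : ℕ) (x : V), gameVal adj f a n x ≤ gameVal adj f b n x + C := by
  intro n
  induction n with
  | zero => exact hab
  | succ n ih =>
    intro x
    rw [gameVal_succ, gameVal_succ]
    have h := Tstep_le hne (gameVal_abs_le hne hf ha n) (gameVal_abs_le hne hf hb n) ih x
    linarith

lemma le_gameVal (hne : ∀ x, {y | adj x y}.Nonempty) {f U : V → ℝ} {Mf MU : ℝ}
    (hf : ∀ x, |f x| ≤ Mf) (hU : ∀ x, |U x| ≤ MU)
    (hsub : ∀ x, U x ≤ Tstep adj U x + f x) :
    ∀ (n : ℕ) (x : V), U x ≤ gameVal adj f U n x := by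
  intro n
  induction n with
  | zero => intro x; exact le_rfl
  | succ n ih =>
    intro x
    rw [gameVal_succ]
    have h := Tstep_le (C := 0) hne hU (gameVal_abs_le hne hf hU n)
      (fun y => by rw [add_zero]; exact ih y) x
    have := hsub x
    linarith

lemma gameVal_le (hne : ∀ x, {y | adj x y}.Nonempty) {f U : V → ℝ} {Mf MU : ℝ}
    (hf : ∀ x, |f x| ≤ Mf) (hU : ∀ x, |U x| ≤ MU)
    (hsup : ∀ x, Tstep adj U x + f x ≤ U x) :
    ∀ (n : ℕ) (x : V), gameVal adj f U n x ≤ U x := by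
  intro n
  induction n with
  | zero => intro x; exact le_rfl
  | succ n ih =>
    intro x
    rw [gameVal_succ]
    have h := Tstep_le (C := 0) hne (gameVal_abs_le hne hf hU n) hU
      (fun y => by rw [add_zero]; exact ih y) x
    have := hsup x
    linarith

lemma sSup_const_mul_image {c : ℝ} (hc : 0 ≤ c) {s : Set ℝ} (hs : s.Nonempty)
    (hbdd : BddAbove s) : sSup ((fun r => c * r) '' s) = c * sSup s := by
  refine (Monotone.map_csSup_of_continuousAt ?_ ?_ hs hbdd).symm
  · exact (continuous_const.mul continuous_id).continuousAt
  · exact fun x y h => mul_le_mul_of_nonneg_left h hc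

lemma sInf_const_mul_image {c : ℝ} (hc : 0 ≤ c) {s : Set ℝ} (hs : s.Nonempty)
    (hbdd : BddBelow s) : sInf ((fun r => c * r) '' s) = c * sInf s := by
  refine (Monotone.map_csInf_of_continuousAt ?_ ?_ hs hbdd).symm
  · exact (continuous_const.mul continuous_id).continuousAt
  · exact fun x y h => mul_le_mul_of_nonneg_left h hc

lemma nonneg_of_forall_nat_mul {K c : ℝ} (h : ∀ n : ℕ, -K ≤ (n : ℝ) * c) : 0 ≤ c := by
  by_contra hc
  push_neg at hc
  obtain ⟨n, hn⟩ := exists_nat_gt (K / (-c))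
  have h1 : (n : ℝ) * (-c) ≤ K := by have := h n; linarith
  have h2 : (n : ℝ) ≤ K / (-c) := (le_div_iff₀ (by linarith : (0:ℝ) < -c)).2 h1
  linarith

end Aux

/-- On a compact length space, if a continuous `u` satisfies
`−Δ∞^ε u ≤ f` everywhere then `c_f(ε) ≥ 0`; if `−Δ∞^ε u ≥ f` everywhere then
`c_f(ε) ≤ 0`. -/
theorem subsolution_sign_of_advantage {V : Type*} [MetricSpace V] [CompactSpace V]
    [Nonempty V] (hV : IsLengthSpace V) (ε : ℝ) (hε : 0 < ε)
    (f u : V → ℝ) (hf : Continuous f) (hu : Continuous u) :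
    ((∀ x : V, -discLap ε u x ≤ f x) →
      ∀ c : ℝ, IsLTA (fun a b => dist a b ≤ ε) f c → 0 ≤ c) ∧
    ((∀ x : V, f x ≤ -discLap ε u x) →
      ∀ c : ℝ, IsLTA (fun a b => dist a b ≤ ε) f c → c ≤ 0) := by
  clear hV
  set adj : V → V → Prop := fun a b => dist a b ≤ ε with hadj
  have hne : ∀ x : V, {y | adj x y}.Nonempty := fun x => ⟨x, by simp [hadj, hε.le]⟩
  obtain ⟨Mf, hMf⟩ : ∃ M : ℝ, ∀ x, |f x| ≤ M := by
    obtain ⟨M, hM⟩ := (isCompact_range hf.norm).bddAbove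
    exact ⟨M, fun x => by simpa [Real.norm_eq_abs] using hM (Set.mem_range_self x)⟩
  obtain ⟨Mu, hMu⟩ : ∃ M : ℝ, ∀ x, |u x| ≤ M := by
    obtain ⟨M, hM⟩ := (isCompact_range hu.norm).bddAbove
    exact ⟨M, fun x => by simpa [Real.norm_eq_abs] using hM (Set.mem_range_self x)⟩
  have hε2 : (0:ℝ) < ε ^ 2 := by positivity
  set c2 : ℝ := 2 / ε ^ 2 with hc2
  have hc2pos : (0:ℝ) < c2 := by positivity
  set U : V → ℝ := fun x => c2 * u x with hUdef
  set MU : ℝ := c2 * Mu with hMUdef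
  have hU : ∀ x, |U x| ≤ MU := fun x => by
    rw [hUdef, hMUdef]
    simp only [abs_mul, abs_of_pos hc2pos]
    exact mul_le_mul_of_nonneg_left (hMu x) hc2pos.le
  have hMU0 : 0 ≤ MU := (abs_nonneg _).trans (hU (Classical.arbitrary V))
  -- key rewriting of the one-step operator on U
  have hT : ∀ x : V, Tstep adj U x =
      c2 * ((sSup (u '' {y | dist x y ≤ ε}) + sInf (u '' {y | dist x y ≤ ε})) / 2) := by
    intro x
    have hAbb : BddAbove (u '' {y | adj x y}) :=
      img_bddAbove (fun y => (abs_le.1 (hMu y)).2) x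
    have hBbb : BddBelow (u '' {y | adj x y}) :=
      img_bddBelow (fun y => (abs_le.1 (hMu y)).1) x
    have himg : U '' {y | adj x y} = (fun r => c2 * r) '' (u '' {y | adj x y}) := by
      rw [Set.image_image]
    have h1 : sSup (U '' {y | adj x y}) = c2 * sSup (u '' {y | adj x y}) := by
      rw [himg]; exact sSup_const_mul_image hc2pos.le (img_ne hne u x) hAbb
    have h2 : sInf (U '' {y | adj x y}) = c2 * sInf (u '' {y | adj x y}) := by
      rw [himg]; exact sInf_const_mul_image hc2pos.le (img_ne hne u x) hBbb
    unfold Tstep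
    rw [h1, h2]
    ring
  -- translation between discLap inequalities and sub/supersolution properties of U
  have hkey : ∀ x : V,
      (Tstep adj U x + f x) - U x
        = c2 / 2 * (ε ^ 2 * (discLap ε u x + f x)) + (f x - c2 / 2 * (ε ^ 2 * f x)) := by
    intro x
    rw [hT x, hUdef, hc2]
    unfold discLap
    field_simp
    ring
  have hsimp : ∀ x : V,
      (Tstep adj U x + f x) - U x = c2 / 2 * ε ^ 2 * (discLap ε u x + f x) := by
    intro x
    rw [hkey x]
    have : c2 / 2 * (ε ^ 2 * f x) = f x := by rw [hc2]; field_simp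
    rw [this]
    ring
  have hfac : c2 / 2 * ε ^ 2 = 1 := by rw [hc2]; field_simp
  constructor
  · intro h1 c hc
    have hsub : ∀ x, U x ≤ Tstep adj U x + f x := by
      intro x
      have h := h1 x
      have h2 := hsimp x
      rw [hfac, one_mul] at h2
      linarith
    obtain ⟨C₀, hC₀⟩ := hc
    have hlow : ∀ (n : ℕ) (x : V), -(2 * MU) ≤ gameVal adj f (fun _ => (0:ℝ)) n x := by
      intro n x
      have h3 := le_gameVal hne hMf hU hsub n x
      have h4 := gameVal_le_gameVal (C := MU) (Mb := MU) (b := fun _ => (0:ℝ)) hne hMf hU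
        (fun _ => by simpa using hMU0)
        (fun x => by show U x ≤ 0 + MU; simpa using (abs_le.1 (hU x)).2) n x
      have h5 := (abs_le.1 (hU x)).1
      linarith
    refine nonneg_of_forall_nat_mul (K := 2 * MU + C₀) fun n => ?_
    have h6 := hC₀ n (Classical.arbitrary V)
    have h7 := hlow n (Classical.arbitrary V)
    have := (abs_le.1 h6).2
    linarith
  · intro h1 c hc
    have hsup : ∀ x, Tstep adj U x + f x ≤ U x := by
      intro x
      have h := h1 x
      have h2 := hsimp x
      rw [hfac, one_mul] at h2
      linarith
    obtain ⟨C₀, hC₀⟩ := hc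
    have hhigh : ∀ (n : ℕ) (x : V), gameVal adj f (fun _ => (0:ℝ)) n x ≤ 2 * MU := by
      intro n x
      have h3 := gameVal_le hne hMf hU hsup n x
      have h4 := gameVal_le_gameVal (C := MU) (Ma := MU) (a := fun _ => (0:ℝ)) hne hMf
        (fun _ => by simpa using hMU0) hU
        (fun x => by show (0:ℝ) ≤ U x + MU; linarith [(abs_le.1 (hU x)).1]) n x
      have h5 := (abs_le.1 (hU x)).2
      linarith
    have : 0 ≤ -c := by
      refine nonneg_of_forall_nat_mul (K := 2 * MU + C₀) fun n => ?_
      have h6 := hC₀ n (Classical.arbitrary V)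
      have h7 := hhigh n (Classical.arbitrary V)
      have := (abs_le.1 h6).1
      linarith
    linarith
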